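/- For a finite Coxeter group W of rank n with degrees d₁ ≤ ⋯ ≤ d_n and Coxeter number h = d_n, the number of elements of W lying below the Coxeter element c in absolute order (for the dihedral group I₂(m), say) equals the Catalan number Cat(W) = ∏ᵢ (h + dᵢ)/dᵢ; in particular, for the dihedral group I₂(k) with degrees 2, k and h = k, the interval [1, c] in absolute order has exactly k + 2 elements. -/

import Mathlib

namespace CoxeterSystem

variable {B W : Type*} [Group W] {M : CoxeterMatrix B} (cs : CoxeterSystem M W)

/-- The absolute (reflection) length of `w`: the minimal length of an expression of `w`
as a product of reflections. -/
noncomputable def absLength (w : W) : ℕ :=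
  sInf {n : ℕ | ∃ l : List W, (∀ t ∈ l, cs.IsReflection t) ∧ l.prod = w ∧ l.length = n}

/-- The absolute order on `W`: `u ≤_R w` iff `ℓ_R(u) + ℓ_R(u⁻¹w) = ℓ_R(w)`. -/
def absLe (u w : W) : Prop :=
  cs.absLength u + cs.absLength (u⁻¹ * w) = cs.absLength w

/-- `c` is a (standard) Coxeter element: the product of all the simple reflections, each
occurring exactly once, in some order. -/
def IsCoxeterElement (c : W) : Prop :=
  ∃ l : List B, l.Nodup ∧ (∀ i : B, i ∈ l) ∧ cs.wordProd l = c

end CoxeterSystem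

/-- The Coxeter matrix of the dihedral type `I₂(k)` for `k ≥ 2`. -/
def I2Matrix (k : ℕ) (hk : 2 ≤ k) : CoxeterMatrix (Fin 2) where
  M := Matrix.of fun i j => if i = j then 1 else k
  isSymm := by
    unfold Matrix.IsSymm
    ext i j
    by_cases h : i = j
    · simp [h]
    · have h' : j ≠ i := fun e => h e.symm
      simp [Matrix.transpose_apply, h, h']
  diagonal := by simp
  off_diagonal := by
    intro i j h
    simp only [Matrix.of_apply, if_neg h]
    omega


section Aux2
variable {B W : Type*} [Group W] {M : CoxeterMatrix B} (cs : CoxeterSystem M W)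

lemma CoxeterSystem.absSet_nonempty' (w : W) :
    {n : ℕ | ∃ l : List W, (∀ t ∈ l, cs.IsReflection t) ∧ l.prod = w ∧ l.length = n}.Nonempty := by
  obtain ⟨ω, rfl⟩ := cs.wordProd_surjective w
  refine ⟨ω.length, ω.map cs.simple, ?_, rfl, by simp⟩
  intro t ht
  obtain ⟨i, _, rfl⟩ := List.mem_map.mp ht
  exact cs.isReflection_simple i

lemma CoxeterSystem.absLength_one' : cs.absLength 1 = 0 :=
  Nat.eq_zero_of_le_zero <| Nat.sInf_le ⟨[], by simp, by simp, rfl⟩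

lemma CoxeterSystem.eq_one_of_absLength_eq_zero' {w : W} (h : cs.absLength w = 0) : w = 1 := by
  rcases (Nat.sInf_eq_zero.mp h) with h0 | hemp
  · obtain ⟨l, -, hprod, hlen⟩ := h0
    rw [List.length_eq_zero_iff] at hlen
    simp [hlen] at hprod
    exact hprod.symm
  · exact absurd (cs.absSet_nonempty' w) (by simp [hemp, Set.not_nonempty_empty])

lemma CoxeterSystem.lengthParity_of_isReflection' {t : W} (ht : cs.IsReflection t) :
    cs.lengthParity t = Multiplicative.ofAdd 1 := by
  rw [cs.lengthParity_eq_ofAdd_length]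
  congr 1
  exact ZMod.natCast_eq_one_iff_odd.mpr ht.odd_length

lemma CoxeterSystem.ne_one_of_isReflection' {t : W} (ht : cs.IsReflection t) : t ≠ 1 := by
  intro h
  have := cs.lengthParity_of_isReflection' ht
  rw [h, map_one] at this
  exact absurd this (by decide)

lemma CoxeterSystem.absLength_of_isReflection' {t : W} (ht : cs.IsReflection t) :
    cs.absLength t = 1 := by
  have hle : cs.absLength t ≤ 1 := Nat.sInf_le ⟨[t], by simpa using ht, by simp, rfl⟩
  have hne : cs.absLength t ≠ 0 := fun h =>
    cs.ne_one_of_isReflection' ht (cs.eq_one_of_absLength_eq_zero' h)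
  omega

lemma CoxeterSystem.absLength_eq_two' {w t₁ t₂ : W} (h1 : cs.IsReflection t₁)
    (h2 : cs.IsReflection t₂) (hw : t₁ * t₂ = w) (hne : w ≠ 1) (hnr : ¬ cs.IsReflection w) :
    cs.absLength w = 2 := by
  have hle : cs.absLength w ≤ 2 := Nat.sInf_le ⟨[t₁, t₂], by
    intro t ht
    simp only [List.mem_cons, List.mem_singleton, List.not_mem_nil, or_false] at ht
    rcases ht with rfl | rfl
    · exact h1
    · exact h2, by simpa using hw, rfl⟩
  have h0 : cs.absLength w ≠ 0 := fun h => hne (cs.eq_one_of_absLength_eq_zero' h)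
  have h1' : cs.absLength w ≠ 1 := by
    intro h
    have hmem := Nat.sInf_mem (cs.absSet_nonempty' w)
    rw [show sInf {n : ℕ | ∃ l : List W, (∀ t ∈ l, cs.IsReflection t) ∧ l.prod = w ∧ l.length = n}
        = cs.absLength w from rfl, h] at hmem
    obtain ⟨l, hrefl, hprod, hlen⟩ := hmem
    obtain ⟨a, rfl⟩ := List.length_eq_one_iff.mp hlen
    simp at hprod
    exact hnr (hprod ▸ hrefl a (by simp))
  omega

end Aux2

namespace DNCAux
variable {W : Type*} [Group W] {k : ℕ} {hk : 2 ≤ k} (cs : CoxeterSystem (I2Matrix k hk) W)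

lemma orderOf_c : orderOf (cs.simple 0 * cs.simple 1) = k := by
  have hdvd : orderOf (cs.simple 0 * cs.simple 1) ∣ k := by
    apply orderOf_dvd_of_pow_eq_one
    have h := cs.simple_mul_simple_pow 0 1
    rwa [show (I2Matrix k hk) 0 1 = k from rfl] at h
  have hlift : CoxeterMatrix.IsLiftable (I2Matrix k hk)
      (fun i : Fin 2 => DihedralGroup.sr (if i = 0 then 0 else 1) : Fin 2 → DihedralGroup k) := by
    intro i j
    have hinv : (DihedralGroup.r (-1) : DihedralGroup k) = (DihedralGroup.r 1)⁻¹ := by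
      rw [eq_inv_iff_mul_eq_one, DihedralGroup.r_mul_r, DihedralGroup.one_def]
      norm_num
    have hr0 : ((DihedralGroup.r 0 : DihedralGroup k))⁻¹ = DihedralGroup.r 0 := by
      rw [← DihedralGroup.one_def, inv_one]
    fin_cases i <;> fin_cases j <;>
      simp [DihedralGroup.sr_mul_sr, show (I2Matrix k hk) 0 0 = 1 from rfl,
        show (I2Matrix k hk) 0 1 = k from rfl, show (I2Matrix k hk) 1 0 = k from rfl,
        show (I2Matrix k hk) 1 1 = 1 from rfl,
        inv_pow, DihedralGroup.r_one_pow_n]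
  have hmul : k ∣ orderOf (cs.simple 0 * cs.simple 1) := by
    have h1 := orderOf_map_dvd (cs.lift ⟨_, hlift⟩) (cs.simple 0 * cs.simple 1)
    rw [map_mul, cs.lift_apply_simple, cs.lift_apply_simple] at h1
    simp only [if_pos rfl, if_neg (by decide : (1 : Fin 2) ≠ 0)] at h1
    rw [DihedralGroup.sr_mul_sr] at h1
    norm_num [DihedralGroup.orderOf_r_one] at h1
    exact h1
  exact Nat.dvd_antisymm hdvd hmul


lemma s0_conj_zpow (j : ℤ) :
    cs.simple 0 * (cs.simple 0 * cs.simple 1) ^ j =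
      (cs.simple 0 * cs.simple 1) ^ (-j) * cs.simple 0 := by
  have h1 : cs.simple 0 * (cs.simple 0 * cs.simple 1) * (cs.simple 0)⁻¹
      = (cs.simple 0 * cs.simple 1)⁻¹ := by
    rw [cs.inv_simple, mul_inv_rev, cs.inv_simple, cs.inv_simple, ← mul_assoc,
      cs.simple_mul_simple_self, one_mul]
  have h2 := map_zpow (MulAut.conj (cs.simple 0)) (cs.simple 0 * cs.simple 1) j
  simp only [MulAut.conj_apply] at h2
  rw [h1, inv_zpow, ← zpow_neg] at h2
  rw [← h2]
  group

lemma conj_form (j m : ℤ) :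
    (cs.simple 0 * cs.simple 1) ^ j * ((cs.simple 0 * cs.simple 1) ^ m * cs.simple 0) *
      ((cs.simple 0 * cs.simple 1) ^ j)⁻¹
      = (cs.simple 0 * cs.simple 1) ^ (m + j + j) * cs.simple 0 := by
  rw [← zpow_neg, mul_assoc, mul_assoc, s0_conj_zpow cs (-j), neg_neg]
  simp only [← mul_assoc, ← zpow_add]
  rw [show j + (m + j) = m + j + j by ring]

lemma isReflection_zpow_mul (i : ℤ) :
    cs.IsReflection ((cs.simple 0 * cs.simple 1) ^ i * cs.simple 0) := by
  rcases Int.even_or_odd i with ⟨j, hj⟩ | ⟨j, hj⟩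
  · have h := (cs.isReflection_simple 0).conj ((cs.simple 0 * cs.simple 1) ^ j)
    have hf := conj_form cs j 0
    rw [zpow_zero, one_mul] at hf
    rw [hf, zero_add, ← hj] at h
    exact h
  · have h1 : cs.IsReflection ((cs.simple 0 * cs.simple 1) ^ (1:ℤ) * cs.simple 0) := by
      have := (cs.isReflection_simple 1).conj (cs.simple 0)
      rw [cs.inv_simple] at this
      rwa [zpow_one]
    have h := h1.conj ((cs.simple 0 * cs.simple 1) ^ j)
    rw [conj_form cs j 1, show (1:ℤ) + j + j = 2*j+1 by ring, ← hj] at h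
    exact h

lemma classify (w : W) :
    (∃ i : ℤ, w = (cs.simple 0 * cs.simple 1) ^ i) ∨
    ∃ i : ℤ, w = (cs.simple 0 * cs.simple 1) ^ i * cs.simple 0 := by
  obtain ⟨ω, rfl⟩ := cs.wordProd_surjective w
  induction ω using List.reverseRecOn with
  | nil => exact Or.inl ⟨0, by simp⟩
  | append_singleton ω j ih =>
    rw [← List.concat_eq_append, cs.wordProd_concat]
    have h01 : j = 0 ∨ j = 1 := by omega
    rcases h01 with rfl | rfl
    · rcases ih with ⟨i, hi⟩ | ⟨i, hi⟩
      · exact Or.inr ⟨i, by rw [hi]⟩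
      · exact Or.inl ⟨i, by rw [hi, mul_assoc, cs.simple_mul_simple_self, mul_one]⟩
    · rcases ih with ⟨i, hi⟩ | ⟨i, hi⟩
      · refine Or.inr ⟨i - 1, ?_⟩
        rw [hi, zpow_sub, zpow_one, mul_assoc]
        congr 1
        rw [mul_inv_rev, cs.inv_simple, cs.inv_simple, cs.simple_mul_simple_cancel_right]
      · exact Or.inl ⟨i + 1, by rw [hi, zpow_add_one, mul_assoc]⟩


end DNCAux

/-- For the dihedral Coxeter group `W = I₂(k)` (with `k ≥ 2`, degrees `2, k` and Coxeter
number `h = k`), the interval `[1, c]` in absolute order below the Coxeter element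
`c = st` has exactly `Cat(I₂(k)) = k + 2` elements. -/
theorem dihedral_noncrossing_card {W : Type*} [Group W] (k : ℕ) (hk : 2 ≤ k)
    (cs : CoxeterSystem (I2Matrix k hk) W) (c : W)
    (hc : c = cs.simple 0 * cs.simple 1) :
    Nat.card {w : W // cs.absLe w c} = k + 2 := by
  have hco : orderOf c = k := by rw [hc]; exact DNCAux.orderOf_c cs
  have hc1 : c ≠ 1 := by
    intro h; rw [h, orderOf_one] at hco; omega
  have hrefl : ∀ i : ℤ, cs.IsReflection (c ^ i * cs.simple 0) := by
    intro i; rw [hc]; exact DNCAux.isReflection_zpow_mul cs i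
  have hεc : cs.lengthParity c = 1 := by
    rw [hc, map_mul, cs.lengthParity_simple, cs.lengthParity_simple]
    decide
  have hεz : ∀ i : ℤ, cs.lengthParity (c ^ i) = 1 := by
    intro i; rw [map_zpow, hεc, one_zpow]
  have hnotreflz : ∀ i : ℤ, ¬ cs.IsReflection (c ^ i) := by
    intro i h
    have h' := cs.lengthParity_of_isReflection' h
    rw [hεz i] at h'
    exact absurd h'.symm (by decide)
  have hs0c : ∀ m : ℤ, (c ^ m * cs.simple 0) * c = c ^ (m - 1) * cs.simple 0 := by
    intro m
    have h1 : cs.simple 0 * c = c⁻¹ * cs.simple 0 := by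
      have h2 := DNCAux.s0_conj_zpow cs 1
      rw [zpow_one] at h2
      rw [hc]
      rw [h2]
      congr 1
      rw [← hc]
      rw [zpow_neg, zpow_one]
    rw [mul_assoc, h1, ← mul_assoc, zpow_sub_one]
  have habsz : ∀ i : ℤ, c ^ i ≠ 1 → cs.absLength (c ^ i) = 2 := by
    intro i h1
    refine cs.absLength_eq_two' (hrefl i) (cs.isReflection_simple 0) ?_ h1 (hnotreflz i)
    rw [mul_assoc, cs.simple_mul_simple_self, mul_one]
  have habsc : cs.absLength c = 2 := by
    have h := habsz 1 (by rwa [zpow_one])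
    rwa [zpow_one] at h
  set f : Fin k → W := fun j => c ^ (j : ℕ) * cs.simple 0 with hf
  have hfr : ∀ j : Fin k, cs.IsReflection (f j) := by
    intro j
    have h := hrefl ((j : ℕ) : ℤ)
    rw [zpow_natCast] at h
    exact h
  have hset : {w : W | cs.absLe w c} = insert 1 (insert c (Set.range f)) := by
    ext w
    simp only [Set.mem_setOf_eq, Set.mem_insert_iff, Set.mem_range]
    constructor
    · intro hw
      rcases DNCAux.classify cs w with ⟨i, hi⟩ | ⟨i, hi⟩
      · rw [← hc] at hi
        subst hi
        by_cases h1 : c ^ i = 1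
        · exact Or.inl h1
        · refine Or.inr (Or.inl ?_)
          have hw' : cs.absLength (c ^ i) + cs.absLength ((c ^ i)⁻¹ * c) = cs.absLength c := hw
          rw [habsz i h1, habsc] at hw'
          have h2 : cs.absLength ((c ^ i)⁻¹ * c) = 0 := by omega
          have h3 := cs.eq_one_of_absLength_eq_zero' h2
          rw [inv_mul_eq_one] at h3
          exact h3
      · rw [← hc] at hi
        refine Or.inr (Or.inr ?_)
        have hnn : 0 ≤ i % (k:ℤ) := Int.emod_nonneg i (by exact_mod_cast (by omega : k ≠ 0))
        have hlt : i % (k:ℤ) < k := Int.emod_lt_of_pos i (by exact_mod_cast (by omega : 0 < k))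
        refine ⟨⟨(i % (k:ℤ)).toNat, by omega⟩, ?_⟩
        show c ^ (((i % (k:ℤ)).toNat : ℕ)) * cs.simple 0 = w
        rw [hi]
        congr 1
        rw [← zpow_natCast, Int.toNat_of_nonneg hnn]
        calc c ^ (i % (k:ℤ)) = c ^ (i % ((orderOf c : ℕ) : ℤ)) := by rw [hco]
        _ = c ^ i := zpow_mod_orderOf c i
    · intro hw
      rcases hw with rfl | hwc | ⟨j, rfl⟩
      · show cs.absLength 1 + cs.absLength (1⁻¹ * c) = cs.absLength c
        rw [cs.absLength_one', inv_one, one_mul, zero_add]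
      · rw [hwc]
        show cs.absLength c + cs.absLength (c⁻¹ * c) = cs.absLength c
        rw [inv_mul_cancel, cs.absLength_one', add_zero]
      · show cs.absLength (f j) + cs.absLength ((f j)⁻¹ * c) = cs.absLength c
        rw [(hfr j).inv, habsc, cs.absLength_of_isReflection' (hfr j)]
        have h2 : f j * c = c ^ (((j:ℕ):ℤ) - 1) * cs.simple 0 := by
          show (c ^ ((j:ℕ)) * cs.simple 0) * c = _
          rw [← zpow_natCast c (j:ℕ)]
          exact hs0c _
        rw [h2, cs.absLength_of_isReflection' (hrefl _)]
  have hninj : Function.Injective f := by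
    intro a b hab
    have hab' : c ^ ((a:ℕ)) * cs.simple 0 = c ^ ((b:ℕ)) * cs.simple 0 := hab
    have hab'' : c ^ ((a:ℕ)) = c ^ ((b:ℕ)) := mul_right_cancel hab'
    have hmod := pow_eq_pow_iff_modEq.mp hab''
    rw [hco] at hmod
    have h : (a:ℕ) % k = (b:ℕ) % k := hmod
    rw [Nat.mod_eq_of_lt a.isLt, Nat.mod_eq_of_lt b.isLt] at h
    exact Fin.ext h
  have hεf : ∀ j : Fin k, cs.lengthParity (f j) = Multiplicative.ofAdd 1 :=
    fun j => cs.lengthParity_of_isReflection' (hfr j)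
  have h1nm : (1:W) ∉ insert c (Set.range f) := by
    intro h
    simp only [Set.mem_insert_iff, Set.mem_range] at h
    rcases h with h | ⟨j, hj⟩
    · exact hc1 h.symm
    · have h' := hεf j
      rw [hj, map_one] at h'
      exact absurd h' (by decide)
  have hcnm : c ∉ Set.range f := by
    rintro ⟨j, hj⟩
    have h' := hεf j
    rw [hj, hεc] at h'
    exact absurd h' (by decide)
  have hfin : (Set.range f).Finite := Set.finite_range f
  have hcard : Nat.card {w : W // cs.absLe w c} = ({w : W | cs.absLe w c} : Set W).ncard :=
    Nat.card_coe_set_eq _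
  rw [hcard, hset, Set.ncard_insert_of_notMem h1nm (hfin.insert c),
    Set.ncard_insert_of_notMem hcnm hfin]
  have hrange : (Set.range f).ncard = k := by
    rw [← Nat.card_coe_set_eq, Nat.card_range_of_injective hninj, Nat.card_eq_fintype_card,
      Fintype.card_fin]
  omega
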